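/- Let X be a random vector in ℝ^k with density proportional to (1 − ‖x‖²)_+^((n−k)/2 − 1) on the open unit ball, n > k. Then Y = X / √(1 − ‖X‖²) has density proportional to (1 + ‖y‖²)^(−(m+k)/2) on ℝ^k, where m = n − k. -/

import Mathlib

open MeasureTheory Real

section Aux

variable {k : ℕ}

private lemma norm_sq_eq_sum' (x : EuclideanSpace ℝ (Fin k)) : ‖x‖ ^ 2 = ∑ i, x i ^ 2 := by
  rw [EuclideanSpace.norm_eq, Real.sq_sqrt (by positivity)]
  simp [Real.norm_eq_abs, sq_abs]

private lemma det_aux' (a b : ℝ) (ha : a ≠ 0) (x : EuclideanSpace ℝ (Fin k)) :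
    (a • ContinuousLinearMap.id ℝ (EuclideanSpace ℝ (Fin k))
      + b • (innerSL ℝ x).smulRight x).det = a ^ k * (1 + a⁻¹ * b * ‖x‖ ^ 2) := by
  set M := a • ContinuousLinearMap.id ℝ (EuclideanSpace ℝ (Fin k))
      + b • (innerSL ℝ x).smulRight x
  have hmat : LinearMap.toMatrix (EuclideanSpace.basisFun (Fin k) ℝ).toBasis
      (EuclideanSpace.basisFun (Fin k) ℝ).toBasis M.toLinearMap
      = a • (1 + Matrix.replicateCol Unit ((a⁻¹ * b) • (x : Fin k → ℝ)) * Matrix.replicateRow Unit (x : Fin k → ℝ)) := by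
    ext i j
    simp [LinearMap.toMatrix_apply, M, ContinuousLinearMap.smulRight_apply,
      EuclideanSpace.inner_single_right, Matrix.one_apply, Matrix.mul_apply,
      EuclideanSpace.single_apply, mul_comm, mul_left_comm]
    split <;> field_simp <;> ring
  have hdot : dotProduct (x : Fin k → ℝ) ((a⁻¹ * b) • (x : Fin k → ℝ))
      = a⁻¹ * b * ‖x‖ ^ 2 := by
    simp only [dotProduct, Pi.smul_apply, smul_eq_mul, norm_sq_eq_sum', Finset.mul_sum]
    exact Finset.sum_congr rfl fun i _ => by ring
  have hM : M.det = LinearMap.det M.toLinearMap := rfl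
  rw [hM, ← LinearMap.det_toMatrix (EuclideanSpace.basisFun (Fin k) ℝ).toBasis, hmat,
    Matrix.det_smul, Matrix.det_one_add_replicateCol_mul_replicateRow, hdot]
  simp

private lemma deriv_aux' (x : EuclideanSpace ℝ (Fin k)) (hx : ‖x‖ < 1) :
    HasFDerivAt (fun y : EuclideanSpace ℝ (Fin k) => (Real.sqrt (1 - ‖y‖ ^ 2))⁻¹ • y)
      ((Real.sqrt (1 - ‖x‖ ^ 2))⁻¹ • ContinuousLinearMap.id ℝ (EuclideanSpace ℝ (Fin k))
        + ((1 - ‖x‖ ^ 2) * Real.sqrt (1 - ‖x‖ ^ 2))⁻¹ • (innerSL ℝ x).smulRight x) x := by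
  have hu : 0 < 1 - ‖x‖ ^ 2 := by nlinarith [norm_nonneg x]
  have hs : 0 < Real.sqrt (1 - ‖x‖ ^ 2) := Real.sqrt_pos.2 hu
  have h1 : HasDerivAt (fun t : ℝ => 1 - t) (-1) (‖x‖ ^ 2) := by
    simpa using (hasDerivAt_id (‖x‖ ^ 2)).const_sub 1
  have h2 : HasDerivAt (fun t : ℝ => Real.sqrt (1 - t))
      (-(1 / (2 * Real.sqrt (1 - ‖x‖ ^ 2)))) (‖x‖ ^ 2) := by
    simpa [Function.comp_def] using (Real.hasDerivAt_sqrt hu.ne').comp (‖x‖ ^ 2) h1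
  have h3 : HasDerivAt (fun t : ℝ => (Real.sqrt (1 - t))⁻¹)
      (2 * ((1 - ‖x‖ ^ 2) * Real.sqrt (1 - ‖x‖ ^ 2)))⁻¹ (‖x‖ ^ 2) := by
    have := h2.inv hs.ne'
    refine this.congr_deriv ?_
    rw [Real.sq_sqrt hu.le]
    field_simp
  have hn : HasFDerivAt (fun y : EuclideanSpace ℝ (Fin k) => ‖y‖ ^ 2)
      (2 • (innerSL ℝ x)) x := by
    simpa using (hasFDerivAt_id x).norm_sq
  have hc : HasFDerivAt (fun y : EuclideanSpace ℝ (Fin k) => (Real.sqrt (1 - ‖y‖ ^ 2))⁻¹)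
      ((2 * ((1 - ‖x‖ ^ 2) * Real.sqrt (1 - ‖x‖ ^ 2)))⁻¹ • (2 • (innerSL ℝ x))) x :=
    HasDerivAt.comp_hasFDerivAt (h₂ := fun t : ℝ => (Real.sqrt (1 - t))⁻¹)
      (f := fun y : EuclideanSpace ℝ (Fin k) => ‖y‖ ^ 2) x h3 hn
  have := hc.smul (hasFDerivAt_id x)
  refine this.congr_fderiv ?_
  ext v
  have h2s : (2:ℝ) * ((1 - ‖x‖ ^ 2) * Real.sqrt (1 - ‖x‖ ^ 2)) ≠ 0 := by positivity
  simp [ContinuousLinearMap.smulRight_apply, smul_smul]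
  left
  field_simp

private lemma map_withDensity_comp' {α β : Type*} [MeasurableSpace α] [MeasurableSpace β]
    (μ : Measure α) {f : α → β} (hf : Measurable f) {g : β → ENNReal} (hg : Measurable g) :
    (μ.withDensity (g ∘ f)).map f = (μ.map f).withDensity g := by
  ext A hA
  rw [Measure.map_apply hf hA, withDensity_apply _ (hf hA), withDensity_apply _ hA,
    setLIntegral_map hA hg hf]
  rfl

private lemma one_add_norm_f (x : EuclideanSpace ℝ (Fin k)) (hx : ‖x‖ < 1) :
    1 + ‖(Real.sqrt (1 - ‖x‖ ^ 2))⁻¹ • x‖ ^ 2 = (1 - ‖x‖ ^ 2)⁻¹ := by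
  have hu : 0 < 1 - ‖x‖ ^ 2 := by nlinarith [norm_nonneg x]
  have hs : 0 < Real.sqrt (1 - ‖x‖ ^ 2) := Real.sqrt_pos.2 hu
  rw [norm_smul, Real.norm_eq_abs, abs_of_pos (inv_pos.2 hs), mul_pow, inv_pow,
    Real.sq_sqrt hu.le]
  field_simp
  ring

private lemma norm_g_lt (y : EuclideanSpace ℝ (Fin k)) :
    ‖(Real.sqrt (1 + ‖y‖ ^ 2))⁻¹ • y‖ < 1 := by
  have h1 : (0:ℝ) < 1 + ‖y‖ ^ 2 := by positivity
  have hs : 0 < Real.sqrt (1 + ‖y‖ ^ 2) := Real.sqrt_pos.2 h1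
  rw [norm_smul, Real.norm_eq_abs, abs_of_pos (inv_pos.2 hs)]
  rw [inv_mul_lt_one₀ hs]
  nlinarith [Real.sq_sqrt h1.le, norm_nonneg y]

private lemma f_g (y : EuclideanSpace ℝ (Fin k)) :
    (Real.sqrt (1 - ‖(Real.sqrt (1 + ‖y‖ ^ 2))⁻¹ • y‖ ^ 2))⁻¹ •
      ((Real.sqrt (1 + ‖y‖ ^ 2))⁻¹ • y) = y := by
  have h1 : (0:ℝ) < 1 + ‖y‖ ^ 2 := by positivity
  have hs : 0 < Real.sqrt (1 + ‖y‖ ^ 2) := Real.sqrt_pos.2 h1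
  have hnorm : ‖(Real.sqrt (1 + ‖y‖ ^ 2))⁻¹ • y‖ ^ 2 = ‖y‖ ^ 2 / (1 + ‖y‖ ^ 2) := by
    rw [norm_smul, Real.norm_eq_abs, abs_of_pos (inv_pos.2 hs), mul_pow, inv_pow,
      Real.sq_sqrt h1.le]
    ring
  have h2 : 1 - ‖(Real.sqrt (1 + ‖y‖ ^ 2))⁻¹ • y‖ ^ 2 = (1 + ‖y‖ ^ 2)⁻¹ := by
    rw [hnorm]; field_simp; ring
  rw [h2, Real.sqrt_inv, inv_inv, smul_smul, mul_inv_cancel₀ hs.ne', one_smul]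

private lemma g_f (x : EuclideanSpace ℝ (Fin k)) (hx : ‖x‖ < 1) :
    (Real.sqrt (1 + ‖(Real.sqrt (1 - ‖x‖ ^ 2))⁻¹ • x‖ ^ 2))⁻¹ •
      ((Real.sqrt (1 - ‖x‖ ^ 2))⁻¹ • x) = x := by
  have hu : 0 < 1 - ‖x‖ ^ 2 := by nlinarith [norm_nonneg x]
  have hs : 0 < Real.sqrt (1 - ‖x‖ ^ 2) := Real.sqrt_pos.2 hu
  rw [one_add_norm_f x hx, Real.sqrt_inv, inv_inv, smul_smul, mul_inv_cancel₀ hs.ne', one_smul]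

end Aux

/-- Measure on `ℝ^k` with density proportional to the Tsallis power-law density
`(1 - ‖x‖²)₊^((n-k)/2 - 1)`. -/
noncomputable def tsallisMeasure (n k : ℕ) (c : ℝ) : Measure (EuclideanSpace ℝ (Fin k)) :=
  volume.withDensity fun x =>
    ENNReal.ofReal (c * (max 0 (1 - ‖x‖ ^ 2)) ^ (((n : ℝ) - k) / 2 - 1))

/-- The Lemma of the paper: `Y = X/√(1-‖X‖²)` is multivariate Student-t distributed,
with density proportional to `(1+‖y‖²)^(-(m+k)/2)` where `m = n - k`. -/
theorem tsallis_to_student (n k : ℕ) (hk : 1 ≤ k) (hkn : k < n) (c : ℝ) (hc : 0 < c)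
    (hprob : IsProbabilityMeasure (tsallisMeasure n k c)) :
    ∃ c' : ℝ, 0 < c' ∧
      (tsallisMeasure n k c).map
          (fun x : EuclideanSpace ℝ (Fin k) => (Real.sqrt (1 - ‖x‖ ^ 2))⁻¹ • x) =
        volume.withDensity fun y : EuclideanSpace ℝ (Fin k) =>
          ENNReal.ofReal (c' * (1 + ‖y‖ ^ 2) ^ (-(((n : ℝ) - k) + k) / 2)) := by
  classical
  set E := EuclideanSpace ℝ (Fin k)
  set p : ℝ := ((n : ℝ) - k) / 2 - 1 with hp_def
  set r : ℝ := -(((n : ℝ) - k) + k) / 2 with hr_def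
  set f : E → E := fun x => (Real.sqrt (1 - ‖x‖ ^ 2))⁻¹ • x with hf_def
  refine ⟨c, hc, ?_⟩
  -- degenerate exponent case is impossible
  by_cases hp0 : p = 0
  · exfalso
    haveI : Nonempty (Fin k) := Fin.pos_iff_nonempty.mp hk
    haveI : Nontrivial E := ⟨0, EuclideanSpace.single ⟨0, hk⟩ 1, fun h => by
      have h2 : ‖(0 : E)‖ = ‖EuclideanSpace.single (⟨0, hk⟩ : Fin k) (1:ℝ)‖ := by rw [h]
      rw [norm_zero, EuclideanSpace.norm_single] at h2
      norm_num at h2⟩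
    have hvol : (volume : Measure E) Set.univ = ⊤ :=
      measure_univ_of_isAddLeftInvariant volume
    have : tsallisMeasure n k c Set.univ = ⊤ := by
      rw [tsallisMeasure, withDensity_apply _ MeasurableSet.univ]
      have : ∀ x : E, ENNReal.ofReal (c * (max 0 (1 - ‖x‖ ^ 2)) ^ p) = ENNReal.ofReal c := by
        intro x; rw [hp0, Real.rpow_zero, mul_one]
      simp only [← hp_def, this]
      rw [setLIntegral_const, hvol, ENNReal.mul_top (ne_of_gt (ENNReal.ofReal_pos.2 hc))]
    rw [hprob.measure_univ] at this
    exact ENNReal.one_ne_top this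
  -- main case
  set s : Set E := Metric.ball 0 1 with hs_def
  have hsm : MeasurableSet s := measurableSet_ball
  have hmem : ∀ x : E, x ∈ s ↔ ‖x‖ < 1 := fun x => mem_ball_zero_iff
  set D : E → ENNReal := fun y => ENNReal.ofReal (c * (1 + ‖y‖ ^ 2) ^ r) with hD_def
  set f' : E → E →L[ℝ] E := fun x =>
    (Real.sqrt (1 - ‖x‖ ^ 2))⁻¹ • ContinuousLinearMap.id ℝ E
      + ((1 - ‖x‖ ^ 2) * Real.sqrt (1 - ‖x‖ ^ 2))⁻¹ • (innerSL ℝ x).smulRight x with hf'_def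
  set J' : E → ENNReal := fun x =>
    ENNReal.ofReal (((Real.sqrt (1 - ‖x‖ ^ 2))⁻¹) ^ k * |1 - ‖x‖ ^ 2|⁻¹) with hJ'_def
  -- measurability
  have hmf : Measurable f := by
    refine Measurable.smul (f := fun x : E => (Real.sqrt (1 - ‖x‖ ^ 2))⁻¹) ?_ measurable_id
    exact ((continuous_const.sub ((continuous_norm).pow 2)).sqrt.measurable).inv
  have hDcont : Continuous D := by
    apply ENNReal.continuous_ofReal.comp
    apply continuous_const.mul
    exact (continuous_const.add ((continuous_norm).pow 2)).rpow_const
      fun y => Or.inl (show (1:ℝ) + ‖y‖ ^ 2 ≠ 0 by positivity)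
  have hDmeas : Measurable D := hDcont.measurable
  have hJ'meas : Measurable J' := by
    apply ENNReal.measurable_ofReal.comp
    apply Measurable.mul
    · exact (((continuous_const.sub ((continuous_norm).pow 2)).sqrt.measurable).inv).pow_const k
    · exact ((continuous_const.sub ((continuous_norm).pow 2)).abs.measurable).inv
  -- derivative on s
  have hderiv : ∀ x ∈ s, HasFDerivWithinAt f (f' x) s x := fun x hx =>
    (deriv_aux' x ((hmem x).1 hx)).hasFDerivWithinAt
  -- injectivity on s
  have hinj : Set.InjOn f s := by
    intro x hx x' hx' hxy
    have h1 := g_f x ((hmem x).1 hx)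
    have h2 := g_f x' ((hmem x').1 hx')
    rw [show (Real.sqrt (1 - ‖x‖ ^ 2))⁻¹ • x = f x from rfl] at h1
    rw [show (Real.sqrt (1 - ‖x'‖ ^ 2))⁻¹ • x' = f x' from rfl] at h2
    rw [← h1, ← h2, hxy]
  -- surjectivity
  have himg : f '' s = Set.univ := by
    ext y
    simp only [Set.mem_image, Set.mem_univ, iff_true]
    exact ⟨(Real.sqrt (1 + ‖y‖ ^ 2))⁻¹ • y, (hmem _).2 (norm_g_lt y), f_g y⟩
  -- Step A : restrict the density to the ball
  have hA : tsallisMeasure n k c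
      = (volume.restrict s).withDensity (fun x => ENNReal.ofReal (c * (1 - ‖x‖ ^ 2) ^ p)) := by
    rw [tsallisMeasure, ← withDensity_indicator hsm]
    congr 1
    funext x
    by_cases hx : x ∈ s
    · have h1 : ‖x‖ < 1 := (hmem x).1 hx
      rw [Set.indicator_of_mem hx]
      have : max 0 (1 - ‖x‖ ^ 2) = 1 - ‖x‖ ^ 2 :=
        max_eq_right (by nlinarith [norm_nonneg x])
      rw [this]
    · rw [Set.indicator_of_notMem hx]
      have h1 : 1 ≤ ‖x‖ := by
        by_contra h
        exact hx ((hmem x).2 (lt_of_not_ge h))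
      have : max 0 (1 - ‖x‖ ^ 2) = 0 := max_eq_left (by nlinarith)
      rw [this, Real.zero_rpow hp0, mul_zero, ENNReal.ofReal_zero]
  -- Step B : pointwise density factorization on s
  have hB : ∀ x ∈ s, ENNReal.ofReal (c * (1 - ‖x‖ ^ 2) ^ p) = J' x * D (f x) := by
    intro x hx
    have h1 : ‖x‖ < 1 := (hmem x).1 hx
    have hu : 0 < 1 - ‖x‖ ^ 2 := by nlinarith [norm_nonneg x]
    have hs0 : 0 < Real.sqrt (1 - ‖x‖ ^ 2) := Real.sqrt_pos.2 hu
    have hDf : D (f x) = ENNReal.ofReal (c * ((1 - ‖x‖ ^ 2)⁻¹) ^ r) := by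
      simp only [hD_def, hf_def]
      rw [one_add_norm_f x h1]
    rw [hDf, hJ'_def]
    rw [← ENNReal.ofReal_mul (by positivity)]
    congr 1
    rw [abs_of_pos hu]
    -- everything in terms of rpow of u := 1 - ‖x‖^2
    have e1 : ((Real.sqrt (1 - ‖x‖ ^ 2))⁻¹) ^ k = (1 - ‖x‖ ^ 2) ^ (-(k : ℝ) / 2) := by
      rw [Real.sqrt_eq_rpow, ← Real.rpow_neg hu.le, ← Real.rpow_natCast _ k,
        ← Real.rpow_mul hu.le]
      ring_nf
    have e2 : (1 - ‖x‖ ^ 2)⁻¹ = (1 - ‖x‖ ^ 2) ^ (-1 : ℝ) := by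
      rw [Real.rpow_neg_one]
    have e3 : ((1 - ‖x‖ ^ 2)⁻¹) ^ r = (1 - ‖x‖ ^ 2) ^ (-r) := by
      rw [← Real.rpow_neg_one, ← Real.rpow_mul hu.le]
      ring_nf
    rw [e1, e3, e2]
    rw [show (1 - ‖x‖ ^ 2) ^ (-(k:ℝ)/2) * (1 - ‖x‖ ^ 2) ^ (-1:ℝ) * (c * (1 - ‖x‖ ^ 2) ^ (-r))
        = c * (1 - ‖x‖ ^ 2) ^ (-(k:ℝ)/2 + -1 + -r) by
      rw [Real.rpow_add hu, Real.rpow_add hu]; ring]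
    congr 1
    rw [hp_def, hr_def]
    ring
  -- Step B' : the explicit Jacobian equals |det f'| on s
  have hJeq : ∀ x ∈ s, J' x = ENNReal.ofReal |(f' x).det| := by
    intro x hx
    have h1 : ‖x‖ < 1 := (hmem x).1 hx
    have hu : 0 < 1 - ‖x‖ ^ 2 := by nlinarith [norm_nonneg x]
    have hs0 : 0 < Real.sqrt (1 - ‖x‖ ^ 2) := Real.sqrt_pos.2 hu
    have hdet : (f' x).det
        = ((Real.sqrt (1 - ‖x‖ ^ 2))⁻¹) ^ k * (1 - ‖x‖ ^ 2)⁻¹ := by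
      rw [hf'_def]
      rw [det_aux' _ _ (inv_ne_zero hs0.ne') x]
      congr 1
      have : ((Real.sqrt (1 - ‖x‖ ^ 2))⁻¹)⁻¹ * ((1 - ‖x‖ ^ 2) * Real.sqrt (1 - ‖x‖ ^ 2))⁻¹
          = (1 - ‖x‖ ^ 2)⁻¹ := by
        rw [inv_inv, mul_inv]
        field_simp
      rw [this]
      field_simp
      ring
    simp only [hJ'_def]
    rw [hdet, abs_of_pos
      (show (0:ℝ) < ((Real.sqrt (1 - ‖x‖ ^ 2))⁻¹) ^ k * (1 - ‖x‖ ^ 2)⁻¹ by positivity),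
      abs_of_pos hu]
  -- assemble
  rw [hA]
  have hcong1 : (volume.restrict s).withDensity (fun x => ENNReal.ofReal (c * (1 - ‖x‖ ^ 2) ^ p))
      = (volume.restrict s).withDensity (J' * D ∘ f) :=
    withDensity_congr_ae (ae_restrict_of_forall_mem hsm hB)
  rw [hcong1, withDensity_mul _ hJ'meas (hDmeas.comp hmf)]
  have hcong2 : (volume.restrict s).withDensity J'
      = (volume.restrict s).withDensity (fun x => ENNReal.ofReal |(f' x).det|) :=
    withDensity_congr_ae (ae_restrict_of_forall_mem hsm hJeq)
  rw [hcong2, map_withDensity_comp' _ hmf hDmeas,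
    map_withDensity_abs_det_fderiv_eq_addHaar volume hsm.nullMeasurableSet hderiv hinj, himg,
    Measure.restrict_univ]
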